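/- Let f : ℝ → ℝ be continuous and 2π-periodic, n ≥ 1 an integer. Then there exists a 2π-periodic C² solution of u'' + n²u = f(t) if and only if ∫_0^{2π} f(t) cos(nt) dt = 0 and ∫_0^{2π} f(t) sin(nt) dt = 0. -/

import Mathlib

open Real

private lemma periodic_deriv_aux {u : ℝ → ℝ} {T : ℝ} (hd : Differentiable ℝ u)
    (hp : Function.Periodic u T) : Function.Periodic (deriv u) T := by
  intro t
  have h1 : HasDerivAt (fun s => u (s + T)) (deriv u (t + T)) t := by
    have h0 := (hd (t + T)).hasDerivAt.comp t ((hasDerivAt_id t).add_const T)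
    rw [mul_one] at h0
    exact h0
  have h2 : (fun s => u (s + T)) = u := funext fun s => hp s
  rw [h2] at h1
  exact h1.deriv.symm

theorem stmt_19 (n : ℕ) (hn : 1 ≤ n) (f : ℝ → ℝ)
    (hfc : Continuous f) (hfp : Function.Periodic f (2*π)) :
    (∃ u : ℝ → ℝ, ContDiff ℝ 2 u ∧ Function.Periodic u (2*π) ∧
      ∀ t : ℝ, deriv (deriv u) t + (n:ℝ)^2 * u t = f t) ↔
    ((∫ t in (0:ℝ)..(2*π), f t * Real.cos (n*t)) = 0 ∧
     (∫ t in (0:ℝ)..(2*π), f t * Real.sin (n*t)) = 0) := by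
  set k : ℝ := (n : ℝ) with hk_def
  have hk : k ≠ 0 := by
    have h1 : (1:ℝ) ≤ k := by rw [hk_def]; exact_mod_cast hn
    linarith
  have hkt : ∀ t : ℝ, HasDerivAt (fun t => k * t) k t := fun t => by
    simpa using (hasDerivAt_id t).const_mul k
  have hsin : ∀ t : ℝ, HasDerivAt (fun t => Real.sin (k*t)) (Real.cos (k*t) * k) t :=
    fun t => (Real.hasDerivAt_sin (k*t)).comp t (hkt t)
  have hcos : ∀ t : ℝ, HasDerivAt (fun t => Real.cos (k*t)) (-Real.sin (k*t) * k) t :=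
    fun t => (Real.hasDerivAt_cos (k*t)).comp t (hkt t)
  have hcosT : Real.cos (k * (2*π)) = 1 := by
    rw [hk_def]; exact Real.cos_nat_mul_two_pi n
  have hsinT : Real.sin (k * (2*π)) = 0 := by
    have : ((n:ℝ)) * (2*π) = 2 * (n:ℝ) * π := by ring
    rw [hk_def]
    rw [show ((n:ℝ)) * (2*π) = 0 + (n:ℤ) * (2*π) by push_cast; ring]
    rw [Real.sin_add_int_mul_two_pi, Real.sin_zero]
  constructor
  · rintro ⟨u, hu2, hup, hode⟩
    have hdu : Differentiable ℝ u := hu2.differentiable (by norm_num)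
    have hu2' : ContDiff ℝ (1+1) u := by
      rw [show ((1:WithTop ℕ∞) + 1) = 2 by norm_num]; exact hu2
    have hcd1 : ContDiff ℝ 1 (deriv u) := (contDiff_succ_iff_deriv.mp hu2').2.2
    have hdu' : Differentiable ℝ (deriv u) := hcd1.differentiable one_ne_zero
    have hup' : Function.Periodic (deriv u) (2*π) := periodic_deriv_aux hdu hup
    have hu2pi : u (2*π) = u 0 := by simpa using hup 0
    have hdu2pi : deriv u (2*π) = deriv u 0 := by simpa using hup' 0
    have hintc : IntervalIntegrable (fun t => f t * Real.cos (k*t)) MeasureTheory.volume 0 (2*π) :=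
      (hfc.mul (Real.continuous_cos.comp (continuous_const.mul continuous_id))).intervalIntegrable _ _
    have hints : IntervalIntegrable (fun t => f t * Real.sin (k*t)) MeasureTheory.volume 0 (2*π) :=
      (hfc.mul (Real.continuous_sin.comp (continuous_const.mul continuous_id))).intervalIntegrable _ _
    constructor
    · have hF : ∀ t : ℝ, HasDerivAt
          (fun t => deriv u t * Real.cos (k*t) + k * (u t * Real.sin (k*t)))
          (f t * Real.cos (k*t)) t := by
        intro t
        have h := (((hdu' t).hasDerivAt.mul (hcos t)).add
          (((hdu t).hasDerivAt.mul (hsin t)).const_mul k))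
        refine h.congr_deriv ?_
        have := hode t
        linear_combination (Real.cos (k*t)) * this
      have := intervalIntegral.integral_eq_sub_of_hasDerivAt
        (f' := fun t => f t * Real.cos (k*t)) (fun x _ => hF x) hintc
      rw [this]
      simp [hcosT, hsinT, hu2pi, hdu2pi]
    · have hG : ∀ t : ℝ, HasDerivAt
          (fun t => deriv u t * Real.sin (k*t) - k * (u t * Real.cos (k*t)))
          (f t * Real.sin (k*t)) t := by
        intro t
        have h := (((hdu' t).hasDerivAt.mul (hsin t)).sub
          (((hdu t).hasDerivAt.mul (hcos t)).const_mul k))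
        refine h.congr_deriv ?_
        have := hode t
        linear_combination (Real.sin (k*t)) * this
      have := intervalIntegral.integral_eq_sub_of_hasDerivAt
        (f' := fun t => f t * Real.sin (k*t)) (fun x _ => hG x) hints
      rw [this]
      simp [hcosT, hsinT, hu2pi, hdu2pi]
  · rintro ⟨hc, hs⟩
    have gc : Continuous (fun s => f s * Real.cos (k*s)) :=
      hfc.mul (Real.continuous_cos.comp (continuous_const.mul continuous_id))
    have gs : Continuous (fun s => f s * Real.sin (k*s)) :=
      hfc.mul (Real.continuous_sin.comp (continuous_const.mul continuous_id))
    set C : ℝ → ℝ := fun t => ∫ s in (0:ℝ)..t, f s * Real.cos (k*s) with hCdef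
    set S : ℝ → ℝ := fun t => ∫ s in (0:ℝ)..t, f s * Real.sin (k*s) with hSdef
    have hC : ∀ t, HasDerivAt C (f t * Real.cos (k*t)) t := fun t =>
      intervalIntegral.integral_hasDerivAt_right (gc.intervalIntegrable _ _)
        gc.aestronglyMeasurable.stronglyMeasurableAtFilter gc.continuousAt
    have hS : ∀ t, HasDerivAt S (f t * Real.sin (k*t)) t := fun t =>
      intervalIntegral.integral_hasDerivAt_right (gs.intervalIntegrable _ _)
        gs.aestronglyMeasurable.stronglyMeasurableAtFilter gs.continuousAt
    set u : ℝ → ℝ := fun t => (1/k) * (Real.sin (k*t) * C t - Real.cos (k*t) * S t) with hudef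
    set v : ℝ → ℝ := fun t => Real.cos (k*t) * C t + Real.sin (k*t) * S t with hvdef
    have hu : ∀ t, HasDerivAt u (v t) t := by
      intro t
      have h := (((hsin t).mul (hC t)).sub ((hcos t).mul (hS t))).const_mul (1/k)
      refine h.congr_deriv ?_
      simp only [hvdef]
      have hkk : k * k⁻¹ = 1 := mul_inv_cancel₀ hk
      linear_combination (Real.cos (k*t) * C t + Real.sin (k*t) * S t) * hkk
    have hv : ∀ t, HasDerivAt v (f t - k^2 * u t) t := by
      intro t
      have h := (((hcos t).mul (hC t)).add ((hsin t).mul (hS t)))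
      refine h.congr_deriv ?_
      have hpy := Real.sin_sq_add_cos_sq (k*t)
      simp only [hudef]
      have hk2 : k^2 * (1/k) = k := by rw [one_div, pow_two, mul_assoc, mul_inv_cancel₀ hk, mul_one]
      linear_combination (f t) * hpy + (Real.sin (k*t) * C t - Real.cos (k*t) * S t) * hk2
    have hdiff : Differentiable ℝ u := fun t => (hu t).differentiableAt
    have hderiv_eq : deriv u = v := funext fun t => (hu t).deriv
    have hconu : Continuous u := hdiff.continuous
    have hcv : ContDiff ℝ 1 v := by
      rw [contDiff_one_iff_deriv]
      refine ⟨fun t => (hv t).differentiableAt, ?_⟩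
      rw [funext fun t => (hv t).deriv]
      exact hfc.sub (continuous_const.mul hconu)
    -- periodicity of C and S
    have hgpc : Function.Periodic (fun s => f s * Real.cos (k*s)) (2*π) := by
      intro s
      show f (s + 2*π) * Real.cos (k*(s + 2*π)) = f s * Real.cos (k*s)
      rw [hfp s, show k * (s + 2*π) = k*s + (n:ℤ) * (2*π) by push_cast [hk_def]; ring,
        Real.cos_add_int_mul_two_pi]
    have hgps : Function.Periodic (fun s => f s * Real.sin (k*s)) (2*π) := by
      intro s
      show f (s + 2*π) * Real.sin (k*(s + 2*π)) = f s * Real.sin (k*s)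
      rw [hfp s, show k * (s + 2*π) = k*s + (n:ℤ) * (2*π) by push_cast [hk_def]; ring,
        Real.sin_add_int_mul_two_pi]
    have hCp : ∀ t, C (t + 2*π) = C t := by
      intro t
      have h1 := intervalIntegral.integral_add_adjacent_intervals
        (gc.intervalIntegrable (μ := MeasureTheory.volume) 0 t)
        (gc.intervalIntegrable (μ := MeasureTheory.volume) t (t + 2*π))
      have h2 := hgpc.intervalIntegral_add_eq t 0
      simp only [hCdef]
      rw [← h1, h2]
      simp only [zero_add]
      rw [hc]  -- hc : ∫ f cos(n t) = 0 ; need match k vs n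
      ring
    have hSp : ∀ t, S (t + 2*π) = S t := by
      intro t
      have h1 := intervalIntegral.integral_add_adjacent_intervals
        (gs.intervalIntegrable (μ := MeasureTheory.volume) 0 t)
        (gs.intervalIntegrable (μ := MeasureTheory.volume) t (t + 2*π))
      have h2 := hgps.intervalIntegral_add_eq t 0
      simp only [hSdef]
      rw [← h1, h2]
      simp only [zero_add]
      rw [hs]
      ring
    have hupp : Function.Periodic u (2*π) := by
      intro t
      simp only [hudef]
      rw [hCp t, hSp t,
        show k * (t + 2*π) = k*t + (n:ℤ) * (2*π) by push_cast [hk_def]; ring,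
        Real.sin_add_int_mul_two_pi, Real.cos_add_int_mul_two_pi]
    refine ⟨u, ?_, hupp, ?_⟩
    · rw [show (2 : WithTop ℕ∞) = 1 + 1 by norm_num, contDiff_succ_iff_deriv]
      exact ⟨hdiff, by simp, hderiv_eq ▸ hcv⟩
    · intro t
      rw [hderiv_eq, (hv t).deriv]
      ring
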